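/- Let u be a G-convex function on X, ω a compact subset of X, and δ, R > 0 such that ω + δ·B̄(0,1) ⊆ X and |u(x)| ≤ R for all x ∈ ω + δ·B̄(0,1). Then there exists T = T(ω, δ, R) > 0, independent of u, such that ‖y‖ ≤ T for every x ∈ ω and every y ∈ ∂ᴳu(x). -/

import Mathlib

open scoped Pointwise

lemma gsb_deriv_nonneg_of_monotone {g : ℝ → ℝ} {d : ℝ} (hg : Monotone g)
    (hd : HasDerivAt g d 0) : 0 ≤ d := by
  have h1 : Filter.Tendsto (slope g 0) (nhdsWithin 0 (Set.Ioi 0)) (nhds d) :=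
    (hasDerivAt_iff_tendsto_slope.1 hd).mono_left
      (nhdsWithin_mono _ (fun t ht => ne_of_gt ht))
  refine ge_of_tendsto h1 ?_
  filter_upwards [self_mem_nhdsWithin] with t ht
  have ht' : (0:ℝ) < t := ht
  have h2 : g 0 ≤ g t := hg ht'.le
  rw [slope_def_field, sub_zero]
  exact div_nonneg (sub_nonneg.2 h2) ht'.le

lemma gsb_hasDerivAt_line {E : Type*} [NormedAddCommGroup E] [NormedSpace ℝ E]
    {f : E → ℝ} {f' : E →L[ℝ] ℝ} (x v : E) (t : ℝ)
    (hf : HasFDerivAt f f' (x + t • v)) :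
    HasDerivAt (fun s : ℝ => f (x + s • v)) (f' v) t := by
  have hf' : HasFDerivAt f f' (x + (id t) • v) := hf
  have := hf'.comp_hasDerivAt t (((hasDerivAt_id t).smul_const v).const_add x)
  have h2 : HasDerivAt (fun s : ℝ => f (x + s • v)) (f' ((1:ℝ) • v)) t := this
  simpa only [one_smul] using h2

def GConvexOn {E F : Type*} (X : Set E) (Ycl : Set F) (Zcl : Set ℝ)
    (G : E → F → ℝ → ℝ) (u : E → ℝ) : Prop :=
  ∀ x₀ ∈ X, ∃ y₀ ∈ Ycl, ∃ z₀ ∈ Zcl,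
    u x₀ = G x₀ y₀ z₀ ∧ ∀ x ∈ X, G x y₀ z₀ ≤ u x

def GSubdiff {E F : Type*} (X : Set E) (Ycl : Set F)
    (G : E → F → ℝ → ℝ) (H : E → F → ℝ → ℝ)
    (u : E → ℝ) (x : E) : Set F :=
  {y | y ∈ Ycl ∧ ∀ x' ∈ X, G x' y (H x y (u x)) ≤ u x'}

/-- Local uniform bounds on a `G`-convex function `u` imply a bound, independent of `u`,
on the norms of the elements of its `G`-subdifferential over a compact subset. -/
theorem gsubdiff_bounded {M N : ℕ}
    (X : Set (EuclideanSpace ℝ (Fin M))) (Ycl : Set (EuclideanSpace ℝ (Fin N))) (Zcl : Set ℝ)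
    (hXopen : IsOpen X) (hXbdd : Bornology.IsBounded X) (hXconv : Convex ℝ X)
    (G H : EuclideanSpace ℝ (Fin M) → EuclideanSpace ℝ (Fin N) → ℝ → ℝ)
    (Gx : EuclideanSpace ℝ (Fin M) → EuclideanSpace ℝ (Fin N) → ℝ →
      (EuclideanSpace ℝ (Fin M) →L[ℝ] ℝ))
    -- G is C¹ in x with derivative Gx
    (hGx : ∀ y ∈ Ycl, ∀ z ∈ Zcl, ∀ x ∈ X, HasFDerivAt (fun x' => G x' y z) (Gx x y z) x)
    -- G strictly decreasing in z
    (hGanti : ∀ x y, StrictAnti (G x y))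
    -- G coordinatewise nondecreasing in x
    (hmono : ∀ y ∈ Ycl, ∀ z ∈ Zcl, ∀ α β : EuclideanSpace ℝ (Fin M),
      (∀ i, β i ≤ α i) → G β y z ≤ G α y z)
    -- coercivity of the 1-norm of D_x G
    (hcoer : ∀ s > (0:ℝ), ∃ r > (0:ℝ), ∀ x ∈ X, ∀ y ∈ Ycl, ∀ z ∈ Zcl,
      r ≤ ‖y‖ → s ≤ ∑ i, |Gx x y z (EuclideanSpace.single i 1)|)
    -- H is the inverse of G in the price variable
    (hHG : ∀ x y z, H x y (G x y z) = z)
    (hGH : ∀ x y u, G x y (H x y u) = u)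
    (hHmem : ∀ x y u, H x y u ∈ Zcl)
    (ω : Set (EuclideanSpace ℝ (Fin M))) (hωcpt : IsCompact ω) (hωX : ω ⊆ X)
    (δ R : ℝ) (hδ : 0 < δ) (hR : 0 < R)
    (hsub : ω + Metric.closedBall (0 : EuclideanSpace ℝ (Fin M)) δ ⊆ X) :
    ∃ T > (0:ℝ), ∀ u : EuclideanSpace ℝ (Fin M) → ℝ,
      GConvexOn X Ycl Zcl G u →
      (∀ x ∈ ω + Metric.closedBall (0 : EuclideanSpace ℝ (Fin M)) δ, |u x| ≤ R) →
      ∀ x ∈ ω, ∀ y ∈ GSubdiff X Ycl G H u x, ‖y‖ ≤ T := by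
  rcases Nat.eq_zero_or_pos M with hM | hM
  · -- degenerate case M = 0 : coercivity is contradictory for large ‖y‖
    obtain ⟨r, hr, hco⟩ := hcoer 1 one_pos
    refine ⟨r, hr, fun u _hu _hub x hx y hy => ?_⟩
    by_contra h
    push_neg at h
    have h2 := hco x (hωX hx) y hy.1 (H x y (u x)) (hHmem x y (u x)) h.le
    subst hM
    simp at h2
    linarith
  · have hM' : (0:ℝ) < Real.sqrt M := Real.sqrt_pos.2 (by exact_mod_cast hM)
    set c : ℝ := δ / Real.sqrt M with hc_def
    have hc : 0 < c := div_pos hδ hM'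
    have hs : 0 < (2*R+1)/c := by positivity
    obtain ⟨r, hr, hco⟩ := hcoer ((2*R+1)/c) hs
    refine ⟨r, hr, fun u _hu hub x hx y hy => ?_⟩
    by_contra hT
    push_neg at hT
    set z := H x y (u x) with hz_def
    have hyY : y ∈ Ycl := hy.1
    have hzZ : z ∈ Zcl := hHmem x y (u x)
    set e : EuclideanSpace ℝ (Fin M) := WithLp.toLp 2 (fun _ => (1:ℝ)) with he
    set w : EuclideanSpace ℝ (Fin M) := c • e with hw
    have hnorme : ‖e‖ = Real.sqrt M := by
      rw [EuclideanSpace.norm_eq]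
      simp [he]
    have hnormw : ‖w‖ = δ := by
      rw [hw, norm_smul, hnorme, Real.norm_of_nonneg hc.le, hc_def]
      field_simp
    -- membership of the segment
    have hmem : ∀ t : ℝ, t ∈ Set.Icc (0:ℝ) 1 →
        x + t • w ∈ ω + Metric.closedBall (0 : EuclideanSpace ℝ (Fin M)) δ := by
      intro t ht
      refine Set.add_mem_add hx ?_
      rw [Metric.mem_closedBall, dist_zero_right, norm_smul, hnormw,
        Real.norm_of_nonneg ht.1]
      nlinarith [ht.1, ht.2, hδ.le]
    have hmemX : ∀ t : ℝ, t ∈ Set.Icc (0:ℝ) 1 → x + t • w ∈ X :=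
      fun t ht => hsub (hmem t ht)
    -- derivative of ψ
    have hψ : ∀ t : ℝ, t ∈ Set.Icc (0:ℝ) 1 →
        HasDerivAt (fun s : ℝ => G (x + s • w) y z) (Gx (x + t • w) y z w) t :=
      fun t ht => gsb_hasDerivAt_line x w t (hGx y hyY z hzZ _ (hmemX t ht))
    -- mean value theorem
    obtain ⟨t, htIoo, hteq⟩ := exists_hasDerivAt_eq_slope
      (fun s : ℝ => G (x + s • w) y z) (fun s => Gx (x + s • w) y z w)
      one_pos
      (fun s hs' => ((hψ s hs').continuousAt).continuousWithinAt)
      (fun s hs' => hψ s ⟨hs'.1.le, hs'.2.le⟩)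
    have htIcc : t ∈ Set.Icc (0:ℝ) 1 := ⟨htIoo.1.le, htIoo.2.le⟩
    set ξ := x + t • w with hξ_def
    have hξX : ξ ∈ X := hmemX t htIcc
    -- each coordinate derivative is nonnegative
    have hnn : ∀ i : Fin M, 0 ≤ Gx ξ y z (EuclideanSpace.single i 1) := by
      intro i
      set v : EuclideanSpace ℝ (Fin M) := EuclideanSpace.single i 1 with hv
      have hvnn : ∀ j, 0 ≤ v j := by
        intro j
        rw [hv, EuclideanSpace.single_apply]
        split <;> norm_num
      have hder : HasDerivAt (fun s : ℝ => G (ξ + s • v) y z) (Gx ξ y z v) 0 :=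
        gsb_hasDerivAt_line ξ v 0 (by simpa using hGx y hyY z hzZ ξ hξX)
      refine gsb_deriv_nonneg_of_monotone (fun a a' haa' => ?_) hder
      refine hmono y hyY z hzZ _ _ (fun j => ?_)
      have h3 : a * v j ≤ a' * v j := mul_le_mul_of_nonneg_right haa' (hvnn j)
      simpa [PiLp.add_apply, PiLp.smul_apply, smul_eq_mul] using
        add_le_add_left h3 (ξ j)
    -- the coercivity bound at ξ
    have hsum : (2*R+1)/c ≤ ∑ i, |Gx ξ y z (EuclideanSpace.single i 1)| :=
      hco ξ hξX y hyY z hzZ hT.le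
    have hesum : e = ∑ i, EuclideanSpace.single i (1:ℝ) := by
      ext j
      have h5 : (∑ i, EuclideanSpace.single i (1:ℝ) : EuclideanSpace ℝ (Fin M)) j
          = ∑ i, (EuclideanSpace.single i (1:ℝ) : EuclideanSpace ℝ (Fin M)) j :=
        by rw [WithLp.ofLp_sum]; exact Finset.sum_apply j Finset.univ _
      rw [h5]
      simp [he, EuclideanSpace.single_apply]
    have hGxe : Gx ξ y z e = ∑ i, Gx ξ y z (EuclideanSpace.single i 1) := by
      rw [hesum, map_sum]
    have habs : ∑ i, |Gx ξ y z (EuclideanSpace.single i 1)|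
        = ∑ i, Gx ξ y z (EuclideanSpace.single i 1) :=
      Finset.sum_congr rfl (fun i _ => abs_of_nonneg (hnn i))
    have hGxw : Gx ξ y z w = c * Gx ξ y z e := by
      rw [hw, map_smul, smul_eq_mul]
    have hlow : 2*R + 1 ≤ Gx ξ y z w := by
      rw [hGxw, hGxe, ← habs]
      calc 2*R+1 = c * ((2*R+1)/c) := by field_simp
        _ ≤ c * ∑ i, |Gx ξ y z (EuclideanSpace.single i 1)| :=
            mul_le_mul_of_nonneg_left hsum hc.le
    -- the two endpoint values
    have hψ0 : G (x + (0:ℝ) • w) y z = u x := by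
      rw [hz_def]
      simp [hGH]
    have hxwX : x + w ∈ X := by
      simpa [one_smul] using hmemX 1 (by norm_num)
    have hψ1le : G (x + (1:ℝ) • w) y z ≤ u (x + w) := by
      have h4 := hy.2 (x + w) hxwX
      rw [one_smul]
      exact h4
    have hux : -R ≤ u x := by
      have hx' : x ∈ ω + Metric.closedBall (0 : EuclideanSpace ℝ (Fin M)) δ := by
        simpa using hmem 0 (by norm_num)
      exact (abs_le.1 (hub x hx')).1
    have huxw : u (x + w) ≤ R := by
      have hx' : x + w ∈ ω + Metric.closedBall (0 : EuclideanSpace ℝ (Fin M)) δ := by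
        simpa [one_smul] using hmem 1 (by norm_num)
      exact (abs_le.1 (hub _ hx')).2
    -- combine with MVT
    have hslope : Gx ξ y z w = G (x + (1:ℝ) • w) y z - G (x + (0:ℝ) • w) y z := by
      simpa using hteq
    rw [hslope, hψ0] at hlow
    have : G (x + (1:ℝ) • w) y z ≤ R := hψ1le.trans huxw
    linarith
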